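/- Under IMCO and Monotonicity, the share π_w identifies the proportion of immediate always-takers among always-takers: for each wave w > 1 with (T_w(1), T_w(0)) independent of Z, E[1[T_w = w] | Z = 0] = P(T_w(1) = T_w(0) = w) and E[1[1 ≤ T_w < w] | Z = 1] = P(w > T_w(1) = T_w(0) ≥ 1); hence, if P(T_w(1) = T_w(0) ≥ 1) > 0, π_w = E[1[T_w = w] | Z = 0] / (E[1[T_w = w] | Z = 0] + E[1[1 ≤ T_w < w] | Z = 1]) equals P(T_w(1) = T_w(0) = w | T_w(1) = T_w(0) ≥ 1). -/

import Mathlib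

open MeasureTheory ProbabilityTheory Finset

/-- Conditional mean `E[X | A]`: the expectation of `X` under `P` conditioned on the event `A`. -/
noncomputable def cmean {Ω : Type*} [MeasurableSpace Ω] (P : MeasureTheory.Measure Ω)
    (A : Set Ω) (X : Ω → ℝ) : ℝ :=
  ∫ ω, X ω ∂(P[|A])

lemma cmean_ind {Ω : Type*} [MeasurableSpace Ω] (P : MeasureTheory.Measure Ω)
    {A S : Set Ω} (hA : MeasurableSet A) (hS : MeasurableSet S) {f : Ω → ℝ}
    (hf : Set.EqOn f (S.indicator 1) A) :
    cmean P A f = ((P A)⁻¹ * P (S ∩ A)).toReal := by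
  unfold cmean
  rw [ProbabilityTheory.cond, integral_smul_measure, smul_eq_mul, ENNReal.toReal_mul]
  congr 1
  rw [setIntegral_congr_fun hA hf, integral_indicator_one hS, measureReal_def, Measure.restrict_apply hS]

theorem always_taker_share
    {Ω : Type*} [MeasurableSpace Ω] (P : MeasureTheory.Measure Ω) [IsProbabilityMeasure P]
    (Z : Ω → ℕ) (hZmeas : Measurable Z) (hZbin : ∀ ω, Z ω ≤ 1)
    (hZpos : 0 < P {ω | Z ω = 1}) (hZlt : P {ω | Z ω = 1} < 1)
    (wbar : ℕ) (hwbar : 1 ≤ wbar)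
    (T : ℕ → ℕ → Ω → ℕ) (hTmeas : ∀ w z, Measurable (T w z))
    (hTrange : ∀ w ∈ Set.Icc 1 wbar, ∀ z ≤ 1, ∀ ω, T w z ω ≤ w)
    (hIndepT : ∀ w ∈ Set.Icc 1 wbar, IndepFun (fun ω => (T w 1 ω, T w 0 ω)) Z P)
    (hMono : ∀ w ∈ Set.Icc 1 wbar, ∀ᵐ ω ∂P, T w 0 ω ≤ T w 1 ω)
    (hIMCO : ∀ w ∈ Set.Icc 1 wbar, ∀ᵐ ω ∂P, T w 0 ω < T w 1 ω → T w 1 ω = w)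
    (w : ℕ) (hw2 : 2 ≤ w) (hwle : w ≤ wbar)
    (piw : ℝ)
    (hpiw : piw =
      cmean P {ω | Z ω = 0} (fun ω => if T w (Z ω) ω = w then (1 : ℝ) else 0) /
        (cmean P {ω | Z ω = 0} (fun ω => if T w (Z ω) ω = w then (1 : ℝ) else 0)
          + cmean P {ω | Z ω = 1}
              (fun ω => if 1 ≤ T w (Z ω) ω ∧ T w (Z ω) ω < w then (1 : ℝ) else 0))) :
    (cmean P {ω | Z ω = 0} (fun ω => if T w (Z ω) ω = w then (1 : ℝ) else 0)
        = (P {ω | T w 1 ω = w ∧ T w 0 ω = w}).toReal) ∧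
    (cmean P {ω | Z ω = 1} (fun ω => if 1 ≤ T w (Z ω) ω ∧ T w (Z ω) ω < w then (1 : ℝ) else 0)
        = (P {ω | T w 1 ω = T w 0 ω ∧ 1 ≤ T w 0 ω ∧ T w 0 ω < w}).toReal) ∧
    (0 < P {ω | T w 1 ω = T w 0 ω ∧ 1 ≤ T w 0 ω} →
      piw = ((P[|{ω | T w 1 ω = T w 0 ω ∧ 1 ≤ T w 0 ω}])
        {ω | T w 1 ω = w ∧ T w 0 ω = w}).toReal) := by
  have hwIcc : w ∈ Set.Icc 1 wbar := ⟨le_trans one_le_two hw2, hwle⟩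
  have hV : Measurable (fun ω => (T w 1 ω, T w 0 ω)) := (hTmeas w 1).prodMk (hTmeas w 0)
  have hA1 : MeasurableSet {ω | Z ω = 1} := hZmeas (measurableSet_singleton 1)
  have hA0 : MeasurableSet {ω | Z ω = 0} := hZmeas (measurableSet_singleton 0)
  have hsetcompl : {ω | Z ω = 0} = {ω | Z ω = 1}ᶜ := by
    ext ω
    have := hZbin ω
    simp only [Set.mem_setOf_eq, Set.mem_compl_iff]
    omega
  have hZ0pos : 0 < P {ω | Z ω = 0} := by
    rw [hsetcompl, prob_compl_eq_one_sub hA1]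
    exact tsub_pos_of_lt hZlt
  -- useful measurable sets
  have hS0 : MeasurableSet {ω | T w 0 ω = w} := hTmeas w 0 (measurableSet_singleton w)
  have hS1 : MeasurableSet {ω | 1 ≤ T w 1 ω ∧ T w 1 ω < w} :=
    ((hTmeas w 1 measurableSet_Ici).inter (hTmeas w 1 measurableSet_Iio))
  have hE1 : MeasurableSet {ω | T w 1 ω = w ∧ T w 0 ω = w} :=
    (hTmeas w 1 (measurableSet_singleton w)).inter hS0
  -- First claim
  have key0 : cmean P {ω | Z ω = 0} (fun ω => if T w (Z ω) ω = w then (1 : ℝ) else 0)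
      = (P {ω | T w 0 ω = w}).toReal := by
    rw [cmean_ind P hA0 hS0 (fun ω hω => by
      simp only [Set.mem_setOf_eq] at hω
      simp [Set.indicator_apply, hω])]
    have hind : P ({ω | T w 0 ω = w} ∩ {ω | Z ω = 0})
        = P {ω | T w 0 ω = w} * P {ω | Z ω = 0} := by
      have := (hIndepT w hwIcc).measure_inter_preimage_eq_mul {p : ℕ × ℕ | p.2 = w} {0}
        (measurable_snd (measurableSet_singleton w)) (measurableSet_singleton 0)
      exact this
    rw [hind, ← mul_assoc, mul_comm ((P {ω | Z ω = 0})⁻¹),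
      mul_assoc, ENNReal.inv_mul_cancel hZ0pos.ne' (measure_ne_top P _), mul_one]
  have hae0 : P {ω | T w 0 ω = w} = P {ω | T w 1 ω = w ∧ T w 0 ω = w} := by
    apply measure_congr
    rw [Filter.eventuallyEq_set]
    filter_upwards [hMono w hwIcc] with ω hm
    have hr := hTrange w hwIcc 1 le_rfl ω
    show (T w 0 ω = w) ↔ (T w 1 ω = w ∧ T w 0 ω = w)
    omega
  -- Second claim
  have key1 : cmean P {ω | Z ω = 1}
      (fun ω => if 1 ≤ T w (Z ω) ω ∧ T w (Z ω) ω < w then (1 : ℝ) else 0)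
      = (P {ω | 1 ≤ T w 1 ω ∧ T w 1 ω < w}).toReal := by
    rw [cmean_ind P hA1 hS1 (fun ω hω => by
      simp only [Set.mem_setOf_eq] at hω
      simp [Set.indicator_apply, hω])]
    have hind : P ({ω | 1 ≤ T w 1 ω ∧ T w 1 ω < w} ∩ {ω | Z ω = 1})
        = P {ω | 1 ≤ T w 1 ω ∧ T w 1 ω < w} * P {ω | Z ω = 1} := by
      have := (hIndepT w hwIcc).measure_inter_preimage_eq_mul
        {p : ℕ × ℕ | 1 ≤ p.1 ∧ p.1 < w} {1}
        ((measurable_fst measurableSet_Ici).inter (measurable_fst measurableSet_Iio))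
        (measurableSet_singleton 1)
      exact this
    rw [hind, ← mul_assoc, mul_comm ((P {ω | Z ω = 1})⁻¹),
      mul_assoc, ENNReal.inv_mul_cancel hZpos.ne' (measure_ne_top P _), mul_one]
  have hae1 : P {ω | 1 ≤ T w 1 ω ∧ T w 1 ω < w}
      = P {ω | T w 1 ω = T w 0 ω ∧ 1 ≤ T w 0 ω ∧ T w 0 ω < w} := by
    apply measure_congr
    rw [Filter.eventuallyEq_set]
    filter_upwards [hMono w hwIcc, hIMCO w hwIcc] with ω hm hi
    show (1 ≤ T w 1 ω ∧ T w 1 ω < w) ↔ (T w 1 ω = T w 0 ω ∧ 1 ≤ T w 0 ω ∧ T w 0 ω < w)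
    constructor
    · rintro ⟨h1, h2⟩
      rcases hm.lt_or_eq with hlt | heq
      · exact absurd (hi hlt) (by omega)
      · exact ⟨heq.symm, by omega, by omega⟩
    · rintro ⟨he, h1, h2⟩
      omega
  refine ⟨by rw [key0, hae0], by rw [key1, hae1], fun hCpos => ?_⟩
  -- Third claim
  set E1 := {ω | T w 1 ω = w ∧ T w 0 ω = w} with hE1def
  set E2 := {ω | T w 1 ω = T w 0 ω ∧ 1 ≤ T w 0 ω ∧ T w 0 ω < w} with hE2def
  set C := {ω | T w 1 ω = T w 0 ω ∧ 1 ≤ T w 0 ω} with hCdef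
  have hE2meas : MeasurableSet E2 := by
    have h12 : MeasurableSet {ω | T w 1 ω = T w 0 ω} := by
      have : {ω | T w 1 ω = T w 0 ω}
          = (fun ω => (T w 1 ω, T w 0 ω)) ⁻¹' {p : ℕ × ℕ | p.1 = p.2} := rfl
      rw [this]
      exact hV ((Set.to_countable _).measurableSet)
    exact h12.inter ((hTmeas w 0 measurableSet_Ici).inter (hTmeas w 0 measurableSet_Iio))
  have hCmeas : MeasurableSet C := by
    have h12 : MeasurableSet {ω | T w 1 ω = T w 0 ω} := by
      have : {ω | T w 1 ω = T w 0 ω}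
          = (fun ω => (T w 1 ω, T w 0 ω)) ⁻¹' {p : ℕ × ℕ | p.1 = p.2} := rfl
      rw [this]
      exact hV ((Set.to_countable _).measurableSet)
    exact h12.inter (hTmeas w 0 measurableSet_Ici)
  have hCeq : C = E1 ∪ E2 := by
    ext ω
    have hr0 := hTrange w hwIcc 0 (by norm_num) ω
    have hr1 := hTrange w hwIcc 1 le_rfl ω
    simp only [hCdef, hE1def, hE2def, Set.mem_setOf_eq, Set.mem_union]
    omega
  have hdisj : Disjoint E1 E2 := by
    rw [Set.disjoint_left]
    intro ω h1 h2
    simp only [hE1def, hE2def, Set.mem_setOf_eq] at h1 h2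
    omega
  have hPC : P C = P E1 + P E2 := by rw [hCeq, measure_union hdisj hE2meas]
  have hsub : C ∩ E1 = E1 := by
    apply Set.inter_eq_right.mpr
    intro ω hω
    simp only [hE1def, hCdef, Set.mem_setOf_eq] at hω ⊢
    omega
  rw [hpiw, key0, hae0, key1, hae1, cond_apply hCmeas P E1, hsub, hPC,
    ENNReal.toReal_mul, ENNReal.toReal_inv,
    ENNReal.toReal_add (measure_ne_top P E1) (measure_ne_top P E2)]
  rw [inv_mul_eq_div]
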